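/- (Theorem 3.) Let S denote the positive semidefinite square root of the Gram matrix G = ΦᴴΦ, and let q be the number of distinct eigenvalues of G. Suppose there exist real constants a_1,…,a_q such that the diagonal entries satisfy (S^t)_{ii} = η_i · a_t for all 1 ≤ i ≤ m and all 1 ≤ t ≤ q. Then the equal-probability measurement is optimal: the constant vector p_i = λ_min is primal feasible and Σ_i η_i p'_i ≤ λ_min for every primal feasible p'. (The diagonal entries (S^t)_{ii} equal the quantities ⟨φ_i, (ΦΦᴴ)^{t/2−1} φ_i⟩ of the paper.) -/

import Mathlib

open Matrix BigOperators ComplexOrder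

noncomputable section

/-- The reciprocal states: columns of `Φ (ΦᴴΦ)⁻¹`. -/
def reciprocal {r m : ℕ} (Φ : Matrix (Fin r) (Fin m) ℂ) : Matrix (Fin r) (Fin m) ℂ :=
  Φ * (Φᴴ * Φ)⁻¹

/-- The rank-one operator `Q_i = φ̃_i φ̃_iᴴ`. -/
def Qop {r m : ℕ} (Φ : Matrix (Fin r) (Fin m) ℂ) (i : Fin m) : Matrix (Fin r) (Fin r) ℂ :=
  vecMulVec (fun a => reciprocal Φ a i) (fun b => star (reciprocal Φ b i))

/-- `p` is primal feasible: `p_i ≥ 0` and `I - Σ p_i Q_i ⪰ 0`. -/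
def PrimalFeasible {r m : ℕ} (Φ : Matrix (Fin r) (Fin m) ℂ) (p : Fin m → ℝ) : Prop :=
  (∀ i, 0 ≤ p i) ∧
    ((1 : Matrix (Fin r) (Fin r) ℂ) - ∑ i : Fin m, (p i : ℂ) • Qop Φ i).PosSemidef

/-- `(X, z)` is dual feasible: `X ⪰ 0`, `z_i ≥ 0` and `Re Tr(Q_i X) = η_i + z_i`. -/
def DualFeasible {r m : ℕ} (Φ : Matrix (Fin r) (Fin m) ℂ) (η : Fin m → ℝ)
    (X : Matrix (Fin r) (Fin r) ℂ) (z : Fin m → ℝ) : Prop :=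
  X.PosSemidef ∧ (∀ i, 0 ≤ z i) ∧ ∀ i, (Matrix.trace (Qop Φ i * X)).re = η i + z i

lemma aux_interp (q : ℕ) (s : Finset ℝ) (hcard : s.card ≤ q) (h0 : (0:ℝ) ∉ s) (f : ℝ → ℝ) :
    ∃ c : Fin q → ℝ, ∀ x ∈ s, ∑ t : Fin q, c t * x ^ (t.1 + 1) = f x := by
  classical
  set h : Polynomial ℝ := Lagrange.interpolate s id (fun x => f x / x) with hh
  have hinj : Set.InjOn (id : ℝ → ℝ) s := Function.injective_id.injOn
  set p : Polynomial ℝ := Polynomial.X * h with hp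
  refine ⟨fun t => p.coeff (t.1 + 1), fun x hx => ?_⟩
  have hx0 : x ≠ 0 := fun h' => h0 (h' ▸ hx)
  have hevalp : Polynomial.eval x p = f x := by
    have := Lagrange.eval_interpolate_at_node (fun x => f x / x) hinj hx
    simp only [hp, Polynomial.eval_mul, Polynomial.eval_X, id] at this ⊢
    rw [this, mul_comm, div_mul_cancel₀ _ hx0]
  have hdeg : p.natDegree < q + 1 := by
    by_cases hzero : h = 0
    · simp [hp, hzero]
    · have hds : h.degree < s.card := Lagrange.degree_interpolate_lt _ hinj
      have : h.natDegree < s.card := (Polynomial.natDegree_lt_iff_degree_lt hzero).mpr hds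
      have h2 : p.natDegree ≤ 1 + h.natDegree := by
        simpa using Polynomial.natDegree_mul_le (p := (Polynomial.X : Polynomial ℝ)) (q := h)
      omega
  have hc0 : p.coeff 0 = 0 := by simp [hp]
  have hev := Polynomial.eval_eq_sum_range' hdeg x
  rw [Finset.sum_range_succ' (fun k => p.coeff k * x ^ k) q] at hev
  rw [← hevalp, hev, hc0]
  simp [Fin.sum_univ_eq_sum_range (fun k => p.coeff (k+1) * x ^ (k+1)) q]

lemma aux_trace_vecMulVec {r : ℕ} (v w : Fin r → ℂ) (X : Matrix (Fin r) (Fin r) ℂ) :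
    Matrix.trace (vecMulVec v w * X) = w ⬝ᵥ (X *ᵥ v) := by
  simp only [Matrix.trace, Matrix.diag, Matrix.mul_apply, vecMulVec_apply, dotProduct,
    Matrix.mulVec, dotProduct]
  rw [Finset.sum_comm]
  refine Finset.sum_congr rfl fun b _ => ?_
  rw [Finset.mul_sum]
  refine Finset.sum_congr rfl fun a _ => ?_
  ring

lemma aux_diag_nonneg {n : ℕ} {M : Matrix (Fin n) (Fin n) ℂ} (hM : M.PosSemidef) (j : Fin n) :
    0 ≤ M j j := by
  have := hM.dotProduct_mulVec_nonneg (Pi.single j 1)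
  simpa [Matrix.mulVec_single, dotProduct, Pi.single_apply] using this

lemma aux_trace_psd_nonneg {n : ℕ} {B C : Matrix (Fin n) (Fin n) ℂ}
    (hB : B.PosSemidef) (hC : C.PosSemidef) : 0 ≤ (Matrix.trace (B * C)).re := by
  open scoped MatrixOrder in obtain ⟨E, rfl⟩ := CStarAlgebra.nonneg_iff_eq_star_mul_self.mp hC.nonneg
  rw [Matrix.star_eq_conjTranspose]
  have h1 : Matrix.trace (B * (Eᴴ * E)) = Matrix.trace (E * B * Eᴴ) := by
    rw [Matrix.trace_mul_cycle E B Eᴴ, Matrix.trace_mul_comm, Matrix.mul_assoc]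
  have h2 : (E * B * Eᴴ).PosSemidef := hB.mul_mul_conjTranspose_same E
  have h3 : 0 ≤ Matrix.trace (E * B * Eᴴ) :=
    Finset.sum_nonneg fun j _ => aux_diag_nonneg h2 j
  rw [h1]
  exact (Complex.le_def.mp h3).1

/-- Existence of the optimal dual matrix. -/
lemma aux_dual {m r : ℕ}
    (Φ : Matrix (Fin r) (Fin m) ℂ)
    (hGpd : (Φᴴ * Φ).PosDef)
    (η : Fin m → ℝ) (hη1 : ∑ i : Fin m, η i = 1)
    (lam : ℝ)
    (hev : ∃ u : Fin m → ℂ, u ≠ 0 ∧ (Φᴴ * Φ).mulVec u = (lam : ℂ) • u)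
    (S : Matrix (Fin m) (Fin m) ℂ) (hS : S.PosSemidef) (hSsq : S * S = Φᴴ * Φ)
    (q : ℕ) (hq : q = (spectrum ℂ (Φᴴ * Φ)).ncard)
    (a : Fin q → ℝ)
    (ha : ∀ (i : Fin m) (t : Fin q), (S ^ (t.1 + 1)) i i = ((η i * a t : ℝ) : ℂ)) :
    ∃ X : Matrix (Fin r) (Fin r) ℂ, X.PosSemidef ∧ Matrix.trace X = (lam : ℂ) ∧
      ∀ i, Matrix.trace (Qop Φ i * X) = ((η i : ℝ) : ℂ) := by
  classical
  have hGH : (Φᴴ * Φ).IsHermitian := hGpd.1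
  have hdet : IsUnit (Φᴴ * Φ).det := (Matrix.isUnit_iff_isUnit_det _).mp hGpd.isUnit
  have hGinv_mul : (Φᴴ * Φ)⁻¹ * (Φᴴ * Φ) = 1 := Matrix.nonsing_inv_mul _ hdet
  have hmul_Ginv : (Φᴴ * Φ) * (Φᴴ * Φ)⁻¹ = 1 := Matrix.mul_nonsing_inv _ hdet
  have hGiH : ((Φᴴ * Φ)⁻¹)ᴴ = (Φᴴ * Φ)⁻¹ := hGH.inv
  have hRH : (reciprocal Φ)ᴴ = (Φᴴ * Φ)⁻¹ * Φᴴ := by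
    rw [reciprocal, Matrix.conjTranspose_mul, hGiH]
  -- spectral data of S
  set U : Matrix (Fin m) (Fin m) ℂ :=
    (Matrix.IsHermitian.eigenvectorUnitary hS.1 : Matrix (Fin m) (Fin m) ℂ) with hU
  set d : Fin m → ℝ := hS.1.eigenvalues with hd
  have hUU : star U * U = 1 :=
    Unitary.coe_star_mul_self (Matrix.IsHermitian.eigenvectorUnitary hS.1)
  have k2 : ∀ M : Matrix (Fin m) (Fin m) ℂ, star U * (U * M) = M := by
    intro M; rw [← Matrix.mul_assoc, hUU, Matrix.one_mul]
  have hmulconj : ∀ f g : Fin m → ℂ,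
      (U * Matrix.diagonal f * star U) * (U * Matrix.diagonal g * star U)
        = U * Matrix.diagonal (fun j => f j * g j) * star U := by
    intro f g
    simp only [Matrix.mul_assoc]
    rw [k2, ← Matrix.mul_assoc (Matrix.diagonal f) (Matrix.diagonal g),
      Matrix.diagonal_mul_diagonal]
  have hconj_smul : ∀ (z : ℂ) (f : Fin m → ℂ),
      z • (U * Matrix.diagonal f * star U)
        = U * Matrix.diagonal (fun j => z * f j) * star U := by
    intro z f
    have hdz : Matrix.diagonal (fun j => z * f j) = z • Matrix.diagonal f := by
      rw [← Matrix.diagonal_smul]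
      rfl
    rw [hdz, Matrix.mul_smul, Matrix.smul_mul]
  have hSdec : S = U * Matrix.diagonal (fun j => (d j : ℂ)) * star U := by
    have hspt := hS.1.spectral_theorem
    rw [Unitary.conjStarAlgAut_apply] at hspt
    exact hspt
  have hpow : ∀ n : ℕ,
      S ^ (n+1) = U * Matrix.diagonal (fun j => (d j : ℂ)^(n+1)) * star U := by
    intro n
    induction n with
    | zero => simpa using hSdec
    | succ k ih =>
      rw [pow_succ, ih, hSdec, hmulconj]
      congr 2
  have hGdec : Φᴴ * Φ = U * Matrix.diagonal (fun j => (d j : ℂ)^2) * star U := by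
    rw [← hSsq, hSdec, hmulconj]
    congr 2
    funext j
    ring
  have hspec : spectrum ℂ (Φᴴ * Φ) = Set.range (fun j => (d j : ℂ)^2) := by
    rw [hGdec, hU, Unitary.spectrum_star_right_conjugate, spectrum_diagonal]
  -- lam is among the d j ^ 2
  have hlam_mem : (lam : ℂ) ∈ spectrum ℂ (Φᴴ * Φ) := by
    obtain ⟨u, hu0, huev⟩ := hev
    rw [spectrum.mem_iff]
    intro hunit
    have halg : (algebraMap ℂ (Matrix (Fin m) (Fin m) ℂ)) (lam : ℂ) = (lam : ℂ) • 1 :=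
      Algebra.algebraMap_eq_smul_one _
    have h0 : ((algebraMap ℂ (Matrix (Fin m) (Fin m) ℂ)) (lam : ℂ) - (Φᴴ * Φ)) *ᵥ u = 0 := by
      rw [Matrix.sub_mulVec, halg, Matrix.smul_mulVec, Matrix.one_mulVec, huev, sub_self]
    obtain ⟨N, hN⟩ := hunit.exists_left_inv
    apply hu0
    calc u = ((N * ((algebraMap ℂ (Matrix (Fin m) (Fin m) ℂ)) (lam : ℂ) - (Φᴴ * Φ)))) *ᵥ u := by
          rw [hN, Matrix.one_mulVec]
      _ = N *ᵥ (((algebraMap ℂ (Matrix (Fin m) (Fin m) ℂ)) (lam : ℂ) - (Φᴴ * Φ)) *ᵥ u) := by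
          rw [Matrix.mulVec_mulVec]
      _ = 0 := by rw [h0, Matrix.mulVec_zero]
  obtain ⟨j0, hj0⟩ : ∃ j0, d j0 ^ 2 = lam := by
    rw [hspec] at hlam_mem
    obtain ⟨j0, hj0⟩ := hlam_mem
    refine ⟨j0, ?_⟩
    have : ((d j0 ^ 2 : ℝ) : ℂ) = ((lam : ℝ) : ℂ) := by push_cast; exact hj0
    exact_mod_cast this
  have hd_nonneg : ∀ j, 0 ≤ d j := hS.eigenvalues_nonneg
  have hd_ne : ∀ j, d j ≠ 0 := by
    have hdetS : S.det = ∏ j, (d j : ℂ) := hS.1.det_eq_prod_eigenvalues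
    have hdetG : (Φᴴ * Φ).det ≠ 0 := hGpd.det_pos.ne'
    have hSdet : S.det ≠ 0 := by
      intro h
      apply hdetG
      rw [← hSsq, Matrix.det_mul, h, mul_zero]
    rw [hdetS] at hSdet
    intro j hj
    exact hSdet (Finset.prod_eq_zero (Finset.mem_univ j) (by rw [hj]; norm_num))
  -- the interpolation coefficients
  set s : Finset ℝ := Finset.image d Finset.univ with hs
  have h0s : (0:ℝ) ∉ s := by
    simp only [hs, Finset.mem_image]
    rintro ⟨j, -, hj⟩
    exact hd_ne j hj
  have hcard : s.card ≤ q := by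
    have hrange : Set.range (fun j => (d j : ℂ)^2)
        = (fun x : ℝ => ((x : ℂ))^2) '' (s : Set ℝ) := by
      rw [hs, Finset.coe_image, Finset.coe_univ, Set.image_univ, ← Set.range_comp]
      rfl
    have hinjon : Set.InjOn (fun x : ℝ => ((x : ℂ))^2) (s : Set ℝ) := by
      intro x hx y hy hxy
      have hx0 : 0 ≤ x := by
        simp only [hs, Finset.mem_coe, Finset.mem_image] at hx
        obtain ⟨j, -, rfl⟩ := hx; exact hd_nonneg j
      have hy0 : 0 ≤ y := by
        simp only [hs, Finset.mem_coe, Finset.mem_image] at hy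
        obtain ⟨j, -, rfl⟩ := hy; exact hd_nonneg j
      have h2 : x^2 = y^2 := by
        simp only at hxy
        have : ((x^2:ℝ):ℂ) = ((y^2:ℝ):ℂ) := by push_cast; exact hxy
        exact_mod_cast this
      nlinarith [h2]
    have : q = s.card := by
      rw [hq, hspec, hrange, Set.ncard_image_of_injOn hinjon, Set.ncard_coe_finset]
    omega
  -- interpolation: indicator of the eigenvalue lam as a polynomial in S
  set ind : Fin m → ℝ := fun j => if d j ^ 2 = lam then 1 else 0 with hind
  obtain ⟨c, hc⟩ := aux_interp q s hcard h0s (fun x => if x ^ 2 = lam then 1 else 0)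
  have hcd : ∀ j, ∑ t : Fin q, c t * d j ^ (t.1 + 1) = ind j := by
    intro j
    exact hc (d j) (Finset.mem_image_of_mem d (Finset.mem_univ j))
  set P : Matrix (Fin m) (Fin m) ℂ :=
    U * Matrix.diagonal (fun j => ((ind j : ℝ) : ℂ)) * star U with hP
  have hdiag_sum : ∀ (F : Fin q → Fin m → ℂ),
      ∑ t : Fin q, Matrix.diagonal (F t) = Matrix.diagonal (fun j => ∑ t : Fin q, F t j) := by
    intro F
    ext i j
    by_cases h : i = j
    · subst h; simp [Matrix.diagonal_apply_eq, Matrix.sum_apply]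
    · simp [Matrix.sum_apply, Matrix.diagonal_apply_ne _ h]
  have hPpoly : P = ∑ t : Fin q, ((c t : ℝ) : ℂ) • S ^ (t.1 + 1) := by
    have h1 : ∀ t : Fin q, ((c t : ℝ) : ℂ) • S ^ (t.1 + 1)
        = U * Matrix.diagonal (fun j => ((c t : ℝ) : ℂ) * ((d j : ℂ) ^ (t.1 + 1))) * star U := by
      intro t
      rw [hpow t.1, hconj_smul]
    have hfun : (fun j => ((ind j : ℝ) : ℂ))
        = fun j => ∑ t : Fin q, ((c t : ℝ) : ℂ) * ((d j : ℂ) ^ (t.1 + 1)) := by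
      funext j
      have hcast : ((∑ t : Fin q, c t * d j ^ (t.1 + 1) : ℝ) : ℂ) = ((ind j : ℝ) : ℂ) := by
        rw [hcd j]
      push_cast at hcast
      rw [← hcast]
    rw [hP, hfun]
    simp only [h1]
    rw [← Finset.sum_mul, ← Finset.mul_sum, hdiag_sum]
  set b : ℝ := ∑ t : Fin q, c t * a t with hb
  have hPdiag : ∀ i, P i i = ((η i * b : ℝ) : ℂ) := by
    intro i
    rw [hPpoly]
    rw [Matrix.sum_apply]
    have : ∀ t : Fin q, (((c t : ℝ) : ℂ) • S ^ (t.1 + 1)) i i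
        = ((c t * (η i * a t) : ℝ) : ℂ) := by
      intro t
      rw [Matrix.smul_apply, ha i t, smul_eq_mul]
      push_cast
      ring
    simp only [this]
    rw [← Complex.ofReal_sum]
    congr 1
    rw [hb, Finset.mul_sum]
    exact Finset.sum_congr rfl fun t _ => by ring
  have hPG : P * (Φᴴ * Φ) = (lam : ℂ) • P := by
    have hfun2 : (fun j => ((ind j : ℝ) : ℂ) * ((d j : ℂ))^2)
        = (fun j => (lam : ℂ) * ((ind j : ℝ) : ℂ)) := by
      funext j
      have hrfl : ind j = if d j ^ 2 = lam then 1 else 0 := rfl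
      by_cases h : d j ^ 2 = lam
      · have h1 : ind j = 1 := by rw [hrfl, if_pos h]
        rw [h1, ← h]
        push_cast
        ring
      · have h1 : ind j = 0 := by rw [hrfl, if_neg h]
        rw [h1]
        push_cast
        ring
    rw [hP, hGdec, hmulconj, hconj_smul, hfun2]
  have htrP : Matrix.trace P = ((∑ j, ind j : ℝ) : ℂ) := by
    rw [hP, Matrix.trace_mul_cycle, hUU, Matrix.one_mul, Matrix.trace_diagonal]
    push_cast
    rfl
  have htrP' : Matrix.trace P = ((b : ℝ) : ℂ) := by
    have h1 : Matrix.trace P = ∑ i, P i i := rfl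
    rw [h1]
    simp only [hPdiag]
    rw [← Complex.ofReal_sum]
    congr 1
    rw [← Finset.sum_mul, hη1, one_mul]
  have hbind : b = ∑ j, ind j := by
    have := htrP.symm.trans htrP'
    exact_mod_cast this.symm
  have hind_nonneg : ∀ j, 0 ≤ ind j := by
    intro j
    have : ind j = if d j ^ 2 = lam then 1 else 0 := rfl
    rw [this]
    split <;> norm_num
  have hb_pos : 0 < b := by
    rw [hbind]
    have h1 : ind j0 = 1 := by rw [hind]; simp [hj0]
    have := Finset.single_le_sum (fun j _ => hind_nonneg j) (Finset.mem_univ j0)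
    rw [h1] at this
    linarith
  -- the dual optimal matrix
  set β : ℂ := ((b⁻¹ : ℝ) : ℂ) with hβ
  set X : Matrix (Fin r) (Fin r) ℂ :=
    (Φ * U) * Matrix.diagonal (fun j => β * ((ind j : ℝ) : ℂ)) * (Φ * U)ᴴ with hX
  have hXpsd : X.PosSemidef := by
    apply Matrix.PosSemidef.mul_mul_conjTranspose_same
    apply Matrix.PosSemidef.diagonal
    intro j
    have h1 : (0:ℝ) ≤ b⁻¹ * ind j := mul_nonneg (by positivity) (hind_nonneg j)
    rw [hβ]
    calc (0:ℂ) = ((0:ℝ):ℂ) := by norm_num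
      _ ≤ (((b⁻¹ * ind j : ℝ)) : ℂ) := by exact_mod_cast Complex.real_le_real.mpr h1
      _ = (b⁻¹:ℝ) * ((ind j : ℝ) : ℂ) := by push_cast; ring
  have hX2 : X = Φ * (β • P) * Φᴴ := by
    rw [hX, hP, hconj_smul, Matrix.conjTranspose_mul, ← Matrix.star_eq_conjTranspose U]
    simp only [Matrix.mul_assoc]
  have htrX : Matrix.trace X = (lam : ℂ) := by
    rw [hX2, Matrix.trace_mul_cycle, Matrix.mul_smul, Matrix.trace_smul,
      Matrix.trace_mul_comm, hPG, Matrix.trace_smul, htrP']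
    simp only [smul_eq_mul, hβ]
    push_cast
    field_simp
  have k3 : ∀ M : Matrix (Fin m) (Fin m) ℂ, (Φᴴ * Φ)⁻¹ * (Φᴴ * (Φ * M)) = M := by
    intro M
    rw [← Matrix.mul_assoc Φᴴ, ← Matrix.mul_assoc, hGinv_mul, Matrix.one_mul]
  have k4 : Φᴴ * (Φ * (Φᴴ * Φ)⁻¹) = 1 := by
    rw [← Matrix.mul_assoc, hmul_Ginv]
  have hRXR : (reciprocal Φ)ᴴ * X * reciprocal Φ = β • P := by
    rw [hX2, hRH, reciprocal]
    simp only [Matrix.mul_assoc]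
    rw [k4, Matrix.mul_one, k3]
  refine ⟨X, hXpsd, htrX, fun i => ?_⟩
  have h1 : Matrix.trace (Qop Φ i * X)
      = (fun b => star (reciprocal Φ b i)) ⬝ᵥ (X *ᵥ (fun a => reciprocal Φ a i)) := by
    rw [Qop, aux_trace_vecMulVec]
  have h2 : (fun b => star (reciprocal Φ b i)) ⬝ᵥ (X *ᵥ (fun a => reciprocal Φ a i))
      = ((reciprocal Φ)ᴴ * X * reciprocal Φ) i i := by
    simp only [Matrix.mul_apply, Matrix.conjTranspose_apply, dotProduct, Matrix.mulVec,
      dotProduct, Finset.mul_sum, Finset.sum_mul]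
    rw [Finset.sum_comm]
    exact Finset.sum_congr rfl fun aa _ => Finset.sum_congr rfl fun bb _ => by ring
  rw [h1, h2, hRXR, Matrix.smul_apply, hPdiag, hβ, smul_eq_mul]
  push_cast
  field_simp


/-- Primal feasibility matrix inequality. -/
lemma aux_primal {m r : ℕ} (Φ : Matrix (Fin r) (Fin m) ℂ)
    (hGpd : (Φᴴ * Φ).PosDef) (lam : ℝ)
    (hmin : ((Φᴴ * Φ) - (lam : ℂ) • 1).PosSemidef) :
    ((1 : Matrix (Fin r) (Fin r) ℂ) - (lam : ℂ) • (reciprocal Φ * (reciprocal Φ)ᴴ)).PosSemidef := by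
  classical
  have hGH : (Φᴴ * Φ).IsHermitian := hGpd.1
  have hdet : IsUnit (Φᴴ * Φ).det := (Matrix.isUnit_iff_isUnit_det _).mp hGpd.isUnit
  have hGinv_mul : (Φᴴ * Φ)⁻¹ * (Φᴴ * Φ) = 1 := Matrix.nonsing_inv_mul _ hdet
  have hmul_Ginv : (Φᴴ * Φ) * (Φᴴ * Φ)⁻¹ = 1 := Matrix.mul_nonsing_inv _ hdet
  have hGiH : ((Φᴴ * Φ)⁻¹)ᴴ = (Φᴴ * Φ)⁻¹ := hGH.inv
  have hRH : (reciprocal Φ)ᴴ = (Φᴴ * Φ)⁻¹ * Φᴴ := by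
    rw [reciprocal, Matrix.conjTranspose_mul, hGiH]
  have k1 : ∀ M : Matrix (Fin m) (Fin r) ℂ, Φᴴ * (Φ * ((Φᴴ * Φ)⁻¹ * M)) = M := by
    intro M
    rw [← Matrix.mul_assoc Φᴴ Φ, ← Matrix.mul_assoc, hmul_Ginv, Matrix.one_mul]
  set Pr : Matrix (Fin r) (Fin r) ℂ := Φ * ((Φᴴ * Φ)⁻¹ * Φᴴ) with hPr
  have hPrH : Prᴴ = Pr := by
    rw [hPr, Matrix.conjTranspose_mul, Matrix.conjTranspose_mul, hGiH,
      Matrix.conjTranspose_conjTranspose, Matrix.mul_assoc]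
  have hPr2 : Pr * Pr = Pr := by
    rw [hPr, Matrix.mul_assoc, Matrix.mul_assoc ((Φᴴ * Φ)⁻¹) Φᴴ, k1]
  have key : (1 : Matrix (Fin r) (Fin r) ℂ) - (lam : ℂ) • (reciprocal Φ * (reciprocal Φ)ᴴ)
      = (1 - Pr)ᴴ * (1 - Pr)
        + (reciprocal Φ) * ((Φᴴ * Φ) - (lam : ℂ) • 1) * (reciprocal Φ)ᴴ := by
    have e1 : reciprocal Φ * (Φᴴ * Φ) * (reciprocal Φ)ᴴ = Pr := by
      rw [hRH, reciprocal, hPr]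
      simp only [Matrix.mul_assoc]
      rw [k1]
    rw [Matrix.conjTranspose_sub, Matrix.conjTranspose_one, hPrH, Matrix.sub_mul,
      Matrix.mul_sub, Matrix.mul_sub, Matrix.one_mul, Matrix.mul_one, hPr2,
      Matrix.mul_sub (reciprocal Φ), Matrix.sub_mul, e1, Matrix.mul_smul, Matrix.mul_one,
      Matrix.smul_mul, Matrix.one_mul]
    abel
  rw [key]
  exact (Matrix.posSemidef_conjTranspose_mul_self _).add (hmin.mul_mul_conjTranspose_same _)

theorem stmt_12 (m r : ℕ) (hm : 0 < m) (hmr : m ≤ r)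
    (Φ : Matrix (Fin r) (Fin m) ℂ)
    (hind : LinearIndependent ℂ (fun i : Fin m => fun j : Fin r => Φ j i))
    (η : Fin m → ℝ) (hη : ∀ i, 0 ≤ η i) (hη1 : ∑ i : Fin m, η i = 1)
    (lam : ℝ)
    -- `lam` is the smallest eigenvalue of the Gram matrix `ΦᴴΦ`:
    (hev : ∃ u : Fin m → ℂ, u ≠ 0 ∧ (Φᴴ * Φ).mulVec u = (lam : ℂ) • u)
    (hmin : ((Φᴴ * Φ) - (lam : ℂ) • 1).PosSemidef)
    -- `S` is the positive semidefinite square root of the Gram matrix: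
    (S : Matrix (Fin m) (Fin m) ℂ) (hS : S.PosSemidef) (hSsq : S * S = Φᴴ * Φ)
    -- `q` is the number of distinct eigenvalues of the Gram matrix:
    (q : ℕ) (hq : q = (spectrum ℂ (Φᴴ * Φ)).ncard)
    (a : Fin q → ℝ)
    (ha : ∀ (i : Fin m) (t : Fin q), (S ^ (t.1 + 1)) i i = ((η i * a t : ℝ) : ℂ)) :
    PrimalFeasible Φ (fun _ => lam) ∧
      ∀ p' : Fin m → ℝ, PrimalFeasible Φ p' → ∑ i : Fin m, η i * p' i ≤ lam := by
  classical
  -- the Gram matrix is positive definite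
  have hΦker : ∀ u : Fin m → ℂ, Φ *ᵥ u = 0 → u = 0 := by
    intro u hu
    have := Fintype.linearIndependent_iff.mp hind u ?_
    · exact funext this
    · funext j
      have := congrFun hu j
      simpa [Matrix.mulVec, dotProduct, mul_comm] using this
  have hGpd : (Φᴴ * Φ).PosDef := by
    refine Matrix.posDef_iff_dotProduct_mulVec.mpr ⟨Matrix.posSemidef_conjTranspose_mul_self Φ |>.1, fun x hx => ?_⟩
    have h1 : star x ⬝ᵥ ((Φᴴ * Φ) *ᵥ x) = star (Φ *ᵥ x) ⬝ᵥ (Φ *ᵥ x) := by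
      rw [← Matrix.mulVec_mulVec, Matrix.dotProduct_mulVec, Matrix.star_mulVec]
    rw [h1]
    exact Matrix.dotProduct_star_self_pos_iff.mpr (fun h => hx (hΦker x h))
  -- lam is nonnegative
  have hlam0 : 0 ≤ lam := by
    obtain ⟨u, hu0, huev⟩ := hev
    have h1 : (0:ℂ) ≤ star u ⬝ᵥ ((Φᴴ * Φ) *ᵥ u) := hGpd.posSemidef.dotProduct_mulVec_nonneg u
    rw [huev, dotProduct_smul, smul_eq_mul] at h1
    have h3 : (0:ℂ) < star u ⬝ᵥ u := Matrix.dotProduct_star_self_pos_iff.mpr hu0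
    rw [Complex.le_def] at h1
    rw [Complex.lt_def] at h3
    have hre : 0 ≤ lam * (star u ⬝ᵥ u).re := by
      have := h1.1
      simpa [Complex.mul_re] using this
    have hpos : 0 < (star u ⬝ᵥ u).re := by simpa using h3.1
    nlinarith [hpos, hre]
  have hsumQ : ∑ i : Fin m, Qop Φ i = reciprocal Φ * (reciprocal Φ)ᴴ := by
    ext a' b'
    simp [Qop, vecMulVec_apply, Matrix.mul_apply, Matrix.conjTranspose_apply, Matrix.sum_apply]
  constructor
  · refine ⟨fun _ => hlam0, ?_⟩
    have h2 : ∑ i : Fin m, (((fun _ : Fin m => lam) i : ℝ) : ℂ) • Qop Φ i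
        = (lam : ℂ) • (reciprocal Φ * (reciprocal Φ)ᴴ) := by
      rw [← hsumQ, Finset.smul_sum]
    rw [h2]
    exact aux_primal Φ hGpd lam hmin
  · intro p' hp'
    obtain ⟨X, hXpsd, htrX, hQX⟩ :=
      aux_dual Φ hGpd η hη1 lam hev S hS hSsq q hq a ha
    set A : Matrix (Fin r) (Fin r) ℂ := ∑ i : Fin m, ((p' i : ℝ) : ℂ) • Qop Φ i with hA
    have hAX : Matrix.trace (A * X) = ((∑ i, η i * p' i : ℝ) : ℂ) := by
      rw [hA, Finset.sum_mul, Matrix.trace_sum]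
      simp only [Matrix.smul_mul, Matrix.trace_smul, hQX, smul_eq_mul]
      push_cast
      exact Finset.sum_congr rfl fun i _ => by ring
    have h1 : 0 ≤ (Matrix.trace ((1 - A) * X)).re := aux_trace_psd_nonneg hp'.2 hXpsd
    have h2 : Matrix.trace ((1 - A) * X) = Matrix.trace X - Matrix.trace (A * X) := by
      rw [Matrix.sub_mul, Matrix.one_mul, Matrix.trace_sub]
    rw [h2, htrX, hAX] at h1
    simp only [Complex.sub_re, Complex.ofReal_re] at h1
    linarith
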